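/- arXiv:2205.04207 — 3 statements merged into one kernel-verified Lean document; each statement's English description precedes it below -/
import Mathlib

section
/- Let U be a set, f : U → U (partially defined), and N^{cu} a family of normed spaces over U with linear maps P^1_x : N^{cu}_x → N^{cu}_{f(x)}. Suppose there is A₀ > 0 with |log‖(P^1 | N^{cu}_{f^i x})^{-1}‖| ≤ A₀ for all i, and for some c₀ > 0, limsup_{n→∞} (1/n)∑_{i=0}^{n-1} log‖(P^1 | N^{cu}_{f^i x})^{-1}‖ < −c₀. Then for every N large enough there exist ℓ > ζN hyperbolic times 1 < n₁ < … < n_ℓ ≤ N, ζ = c₀/(4A₀ − c₀), such that ∏_{j=n}^{n_i − 1} ‖(P^1 | N^{cu}_{f^j x})^{-1}‖ ≤ e^{−c₀(n_i − n)/4} for all 0 ≤ n < n_i and each i. -/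
open Filter

open scoped Classical in
/-- The set of "hyperbolic times" in `[1, n]` for the cocycle sums of `b`. -/
noncomputable def hypTimes (b : ℕ → ℝ) (n : ℕ) : Finset ℕ :=
  (Finset.Ico 1 (n + 1)).filter fun t =>
    ∀ s < t, (∑ i ∈ Finset.range t, b i) ≤ ∑ i ∈ Finset.range s, b i

lemma pliss_count (b : ℕ → ℝ) (K : ℝ) (hK : 0 ≤ K) (hb : ∀ i, -K ≤ b i) (n : ℕ) :
    ∀ m ≤ n, -((hypTimes b n).card : ℝ) * K ≤ ∑ i ∈ Finset.range m, b i := by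
  classical
  induction n with
  | zero =>
    intro m hm
    interval_cases m
    simp [hypTimes]
  | succ n ih =>
    intro m hm
    have hmono : (hypTimes b n).card ≤ (hypTimes b (n + 1)).card := by
      apply Finset.card_le_card
      unfold hypTimes
      exact Finset.filter_subset_filter _ (Finset.Ico_subset_Ico_right (by omega))
    have hmonoR : ((hypTimes b n).card : ℝ) ≤ ((hypTimes b (n + 1)).card : ℝ) := by
      exact_mod_cast hmono
    rcases Nat.lt_or_ge m (n + 1) with h | h
    · refine le_trans ?_ (ih m (by omega))
      nlinarith
    · have hm' : m = n + 1 := by omega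
      subst hm'
      by_cases hH : ∀ s < n + 1, (∑ i ∈ Finset.range (n+1), b i) ≤ ∑ i ∈ Finset.range s, b i
      · have hmem : (n + 1) ∈ hypTimes b (n + 1) := by
          unfold hypTimes
          simp only [Finset.mem_filter, Finset.mem_Ico]
          exact ⟨⟨by omega, by omega⟩, hH⟩
        have hnotmem : (n + 1) ∉ hypTimes b n := by
          unfold hypTimes
          simp
        have hins : insert (n + 1) (hypTimes b n) ⊆ hypTimes b (n + 1) := by
          intro x hx
          rcases Finset.mem_insert.mp hx with rfl | hx
          · exact hmem
          · unfold hypTimes at hx ⊢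
            simp only [Finset.mem_filter, Finset.mem_Ico] at hx ⊢
            exact ⟨⟨hx.1.1, by omega⟩, hx.2⟩
        have hcard : (hypTimes b n).card + 1 ≤ (hypTimes b (n + 1)).card := by
          calc (hypTimes b n).card + 1 = (insert (n + 1) (hypTimes b n)).card :=
                (Finset.card_insert_of_notMem hnotmem).symm
            _ ≤ _ := Finset.card_le_card hins
        have hcardR : ((hypTimes b n).card : ℝ) + 1 ≤ ((hypTimes b (n + 1)).card : ℝ) := by
          exact_mod_cast hcard
        have hsum : ∑ i ∈ Finset.range (n + 1), b i = (∑ i ∈ Finset.range n, b i) + b n :=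
          Finset.sum_range_succ b n
        have h1 := ih n le_rfl
        have hb' := hb n
        nlinarith
      · push_neg at hH
        obtain ⟨s, hs, hlt⟩ := hH
        have := ih s (by omega)
        nlinarith

/-- Hyperbolic times for the time-one Linear Poincaré flow under non-uniform sectional
expansion on average.  Here `p i` stands for `‖(P¹ | N^{cu}_{fⁱx})⁻¹‖`. -/
theorem hyperbolic_times_of_nonuniform_expansion
    (p : ℕ → ℝ) (hp : ∀ i, 0 < p i)
    (A₀ : ℝ) (hA₀ : 0 < A₀) (hbd : ∀ i, |Real.log (p i)| ≤ A₀)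
    (c₀ : ℝ) (hc₀ : 0 < c₀)
    (hnue : limsup (fun n : ℕ =>
      (1 / (n : ℝ)) * ∑ i ∈ Finset.range n, Real.log (p i)) atTop < -c₀) :
    ∃ N₀ : ℕ, ∀ N : ℕ, N ≥ N₀ →
      ∃ ℓ : ℕ, (ℓ : ℝ) > (c₀ / (4 * A₀ - c₀)) * N ∧
        ∃ n : Fin ℓ → ℕ, StrictMono n ∧ (∀ i, 1 < n i ∧ n i ≤ N) ∧
          ∀ i : Fin ℓ, ∀ m : ℕ, m < n i →
            (∏ j ∈ Finset.Ico m (n i), p j) ≤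
              Real.exp (-c₀ * ((n i : ℝ) - m) / 4) := by
  classical
  set a : ℕ → ℝ := fun i => Real.log (p i) with ha
  have haA : ∀ i, -A₀ ≤ a i ∧ a i ≤ A₀ := fun i => abs_le.mp (hbd i)
  -- the averages are bounded above
  have hbdd : IsBoundedUnder (· ≤ ·) atTop
      (fun n : ℕ => (1 / (n : ℝ)) * ∑ i ∈ Finset.range n, a i) := by
    refine isBoundedUnder_of ⟨A₀, fun n => ?_⟩
    rcases Nat.eq_zero_or_pos n with rfl | hn
    · simpa using hA₀.le
    · have hn0 : (0 : ℝ) < n := by exact_mod_cast hn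
      have hsum : ∑ i ∈ Finset.range n, a i ≤ (n : ℝ) * A₀ := by
        calc ∑ i ∈ Finset.range n, a i ≤ ∑ _i ∈ Finset.range n, A₀ :=
              Finset.sum_le_sum fun i _ => (haA i).2
          _ = (n : ℝ) * A₀ := by simp [mul_comm]
      calc (1 / (n : ℝ)) * ∑ i ∈ Finset.range n, a i
          ≤ (1 / (n : ℝ)) * ((n : ℝ) * A₀) := by
            apply mul_le_mul_of_nonneg_left hsum (by positivity)
        _ = A₀ := by field_simp
  have hev := eventually_lt_of_limsup_lt hnue hbdd
  obtain ⟨N₁, hN₁⟩ := eventually_atTop.mp hev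
  -- eventual summed bound
  have hSa : ∀ n : ℕ, max N₁ 1 ≤ n →
      ∑ i ∈ Finset.range n, a i < -c₀ * n := by
    intro n hn
    have hn1 : 1 ≤ n := le_trans (le_max_right _ _) hn
    have hn0 : (0 : ℝ) < n := by exact_mod_cast hn1
    have h := hN₁ n (le_trans (le_max_left _ _) hn)
    have h2 := mul_lt_mul_of_pos_left h hn0
    have h3 : (n : ℝ) * ((1 / (n : ℝ)) * ∑ i ∈ Finset.range n, a i)
        = ∑ i ∈ Finset.range n, a i := by field_simp
    rw [h3] at h2
    linarith
  -- c₀ < A₀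
  have hc₀A₀ : c₀ < A₀ := by
    set n₂ := max N₁ 1 with hn₂
    have hn0 : (0 : ℝ) < n₂ := by
      have : 1 ≤ n₂ := le_max_right _ _
      exact_mod_cast this
    have h1 := hSa n₂ le_rfl
    have h2 : -(A₀) * (n₂ : ℝ) ≤ ∑ i ∈ Finset.range n₂, a i := by
      calc -(A₀) * (n₂ : ℝ) = ∑ _i ∈ Finset.range n₂, (-A₀) := by simp [mul_comm]
        _ ≤ _ := Finset.sum_le_sum fun i _ => (haA i).1
    nlinarith
  have h4A : (0 : ℝ) < 4 * A₀ - c₀ := by linarith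
  set ζ : ℝ := c₀ / (4 * A₀ - c₀) with hζ
  have hζpos : 0 < ζ := div_pos hc₀ h4A
  set K : ℝ := A₀ - c₀ / 4 with hKdef
  have hKpos : 0 < K := by simp only [hKdef]; linarith
  set b : ℕ → ℝ := fun i => a i + c₀ / 4 with hbdef
  have hbK : ∀ i, -K ≤ b i := by
    intro i
    have := (haA i).1
    simp only [hbdef, hKdef]
    linarith
  have hζK : ζ * K = c₀ / 4 := by
    simp only [hζ, hKdef]
    field_simp
  -- choose N₀
  set M : ℕ := ⌈1 / (2 * ζ)⌉₊ + 1 with hM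
  have hMζ : 1 < 2 * ζ * M := by
    have h1 : (1 / (2 * ζ) : ℝ) < M := by
      calc (1 / (2 * ζ) : ℝ) ≤ ⌈1 / (2 * ζ)⌉₊ := Nat.le_ceil _
        _ < M := by exact_mod_cast Nat.lt_succ_self _
    have h2 : (0 : ℝ) < 2 * ζ := by linarith
    calc (1 : ℝ) = (2 * ζ) * (1 / (2 * ζ)) := by field_simp
      _ < (2 * ζ) * M := by exact mul_lt_mul_of_pos_left h1 h2
  refine ⟨max (max N₁ 1) M, fun N hN => ?_⟩
  have hNN₁ : max N₁ 1 ≤ N := le_trans (le_max_left _ _) hN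
  have hN1 : 1 ≤ N := le_trans (le_max_right _ _) hNN₁
  have hNM : M ≤ N := le_trans (le_max_right _ _) hN
  have hNR : (0 : ℝ) < N := by exact_mod_cast hN1
  have h2ζN : 1 < 2 * ζ * N := by
    have : (M : ℝ) ≤ N := by exact_mod_cast hNM
    nlinarith
  -- sum of b bound
  have hSb : ∑ i ∈ Finset.range N, b i < -(3 * c₀ / 4) * N := by
    have h1 : ∑ i ∈ Finset.range N, b i
        = (∑ i ∈ Finset.range N, a i) + (N : ℝ) * (c₀ / 4) := by
      simp only [hbdef]
      rw [Finset.sum_add_distrib]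
      simp [mul_comm]
    have h2 := hSa N hNN₁
    rw [h1]; linarith
  -- Pliss count
  have hpl := pliss_count b K hKpos.le hbK N N le_rfl
  set cN : ℕ := (hypTimes b N).card with hcN
  have hcNlarge : (cN : ℝ) > 3 * ζ * N := by
    have h1 : (3 * c₀ / 4) * N < (cN : ℝ) * K := by
      have h0 : -(cN : ℝ) * K < -(3 * c₀ / 4) * N := lt_of_le_of_lt hpl hSb
      linarith [h0]
    have h2 : 3 * ζ * N * K = (3 * c₀ / 4) * N := by
      have : ζ * K = c₀ / 4 := hζK
      nlinarith
    nlinarith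
  -- the times ≥ 2
  set T : Finset ℕ := (Finset.Ico 2 (N + 1)).filter fun t =>
    ∀ s < t, (∑ i ∈ Finset.range t, b i) ≤ ∑ i ∈ Finset.range s, b i with hT
  have hsub2 : hypTimes b N ⊆ insert 1 T := by
    intro x hx
    unfold hypTimes at hx
    simp only [Finset.mem_filter, Finset.mem_Ico] at hx
    rcases Nat.eq_or_lt_of_le hx.1.1 with h | h
    · exact Finset.mem_insert.mpr (Or.inl h.symm)
    · refine Finset.mem_insert.mpr (Or.inr ?_)
      simp only [hT, Finset.mem_filter, Finset.mem_Ico]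
      exact ⟨⟨h, hx.1.2⟩, hx.2⟩
  have hcard2 : cN ≤ T.card + 1 := by
    calc cN ≤ (insert 1 T).card := Finset.card_le_card hsub2
      _ ≤ T.card + 1 := Finset.card_insert_le _ _
  refine ⟨T.card, ?_, ?_⟩
  · have h1 : (cN : ℝ) ≤ (T.card : ℝ) + 1 := by exact_mod_cast hcard2
    linarith [h1, hcNlarge, h2ζN]
  · set e := T.orderIsoOfFin rfl with he
    refine ⟨fun i => (e i : ℕ), ?_, ?_, ?_⟩
    · intro i j hij
      exact e.strictMono hij
    · intro i
      have hmem : (e i : ℕ) ∈ T := (e i).2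
      simp only [hT, Finset.mem_filter, Finset.mem_Ico] at hmem
      exact ⟨hmem.1.1, Nat.lt_succ_iff.mp hmem.1.2⟩
    · intro i m hm
      replace hm : m < (e i : ℕ) := hm
      show (∏ j ∈ Finset.Ico m ((e i : ℕ)), p j) ≤
        Real.exp (-c₀ * (((e i : ℕ) : ℝ) - m) / 4)
      have hmem : (e i : ℕ) ∈ T := (e i).2
      simp only [hT, Finset.mem_filter, Finset.mem_Ico] at hmem
      set t : ℕ := (e i : ℕ) with ht
      have hP := hmem.2 m hm
      have hIb : ∑ j ∈ Finset.Ico m t, b j ≤ 0 := by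
        rw [Finset.sum_Ico_eq_sub b hm.le]
        linarith
      have hcardIco : ((Finset.Ico m t).card : ℝ) = (t : ℝ) - m := by
        rw [Nat.card_Ico]
        exact_mod_cast Nat.cast_sub hm.le
      have hIa : ∑ j ∈ Finset.Ico m t, a j ≤ -c₀ * ((t : ℝ) - m) / 4 := by
        have h1 : ∑ j ∈ Finset.Ico m t, b j
            = (∑ j ∈ Finset.Ico m t, a j) + ((t : ℝ) - m) * (c₀ / 4) := by
          simp only [hbdef]
          rw [Finset.sum_add_distrib, Finset.sum_const, nsmul_eq_mul, hcardIco]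
        rw [h1] at hIb
        linarith
      calc ∏ j ∈ Finset.Ico m t, p j
          = Real.exp (∑ j ∈ Finset.Ico m t, a j) := by
            rw [Real.exp_sum]
            exact Finset.prod_congr rfl fun j _ => (Real.exp_log (hp j)).symm
        _ ≤ Real.exp (-c₀ * ((t : ℝ) - m) / 4) := Real.exp_le_exp.mpr hIa
end

section
/- Let J_i : D_i → ℝ (i = 0, …, n−1) be functions that are (L₁, ζ)-Hölder continuous, and suppose x, y are points with intrinsic distances dist(g_i(y), g_i(x)) ≤ ρ·e^{−(n−i)c/8} along each D_i, where g_i denotes i-fold composition of the maps. Then |∑_{i=0}^{n−1}(J_i(g_i y) − J_i(g_i x))| ≤ 2L₁ρ^ζ/(1 − e^{−ζc/8}). In particular, the ratio of products ∏_i e^{J_i(g_i y)} / ∏_i e^{J_i(g_i x)} lies in [C⁻¹, C] with C = exp(2L₁ρ^ζ/(1 − e^{−ζc/8})). -/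
open Set

/-- Bounded distortion at hyperbolic times: Hölder log-Jacobians along exponentially
contracted backward orbit segments have uniformly bounded distortion sums.  Here
`u i = g_i x` and `v i = g_i y` denote the orbits of `x` and `y` along the sections. -/
theorem bounded_distortion_at_hyperbolic_times
    {X : Type*} [MetricSpace X]
    (L₁ ζ : ℝ) (hL₁ : 0 ≤ L₁) (hζ0 : 0 < ζ) (hζ1 : ζ ≤ 1)
    (c : ℝ) (hc : 0 < c) (ρ : ℝ) (hρ : 0 ≤ ρ) (n : ℕ)
    (J : ℕ → X → ℝ)
    (hHolder : ∀ i, i < n → ∀ a b : X, |J i a - J i b| ≤ L₁ * dist a b ^ ζ)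
    (u v : ℕ → X)
    (hdist : ∀ i, i < n → dist (v i) (u i) ≤ ρ * Real.exp (-((n : ℝ) - i) * c / 8)) :
    |∑ i ∈ Finset.range n, (J i (v i) - J i (u i))| ≤
      2 * L₁ * ρ ^ ζ / (1 - Real.exp (-ζ * c / 8)) ∧
    (∏ i ∈ Finset.range n, Real.exp (J i (v i))) /
        (∏ i ∈ Finset.range n, Real.exp (J i (u i))) ∈
      Icc (Real.exp (2 * L₁ * ρ ^ ζ / (1 - Real.exp (-ζ * c / 8))))⁻¹
        (Real.exp (2 * L₁ * ρ ^ ζ / (1 - Real.exp (-ζ * c / 8)))) := by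
  set r : ℝ := Real.exp (-ζ * c / 8) with hr
  have hr0 : 0 < r := Real.exp_pos _
  have hr1 : r < 1 := by
    rw [hr, Real.exp_lt_one_iff]
    have : 0 < ζ * c := mul_pos hζ0 hc
    linarith
  have h1r : 0 < 1 - r := by linarith
  -- bound each term
  have hterm : ∀ i ∈ Finset.range n,
      |J i (v i) - J i (u i)| ≤ L₁ * ρ ^ ζ * r ^ (n - i) := by
    intro i hi
    rw [Finset.mem_range] at hi
    have hd := hdist i hi
    have hd0 : (0:ℝ) ≤ dist (v i) (u i) := dist_nonneg
    have hpow : dist (v i) (u i) ^ ζ ≤ (ρ * Real.exp (-((n : ℝ) - i) * c / 8)) ^ ζ :=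
      Real.rpow_le_rpow hd0 hd hζ0.le
    have key : (ρ * Real.exp (-((n : ℝ) - i) * c / 8)) ^ ζ = ρ ^ ζ * r ^ (n - i) := by
      rw [Real.mul_rpow hρ (Real.exp_pos _).le, ← Real.exp_nat_mul,
        ← Real.exp_mul]
      congr 2
      have : ((n - i : ℕ) : ℝ) = (n : ℝ) - i := by
        push_cast [Nat.cast_sub hi.le]
        ring
      rw [this]
      ring
    calc |J i (v i) - J i (u i)| ≤ L₁ * dist (v i) (u i) ^ ζ := hHolder i hi _ _
      _ ≤ L₁ * (ρ ^ ζ * r ^ (n - i)) := by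
          rw [← key]; exact mul_le_mul_of_nonneg_left hpow hL₁
      _ = L₁ * ρ ^ ζ * r ^ (n - i) := by ring
  have hsum : |∑ i ∈ Finset.range n, (J i (v i) - J i (u i))| ≤
      2 * L₁ * ρ ^ ζ / (1 - r) := by
    calc |∑ i ∈ Finset.range n, (J i (v i) - J i (u i))|
        ≤ ∑ i ∈ Finset.range n, |J i (v i) - J i (u i)| :=
          Finset.abs_sum_le_sum_abs _ _
      _ ≤ ∑ i ∈ Finset.range n, L₁ * ρ ^ ζ * r ^ (n - i) :=
          Finset.sum_le_sum hterm
      _ = L₁ * ρ ^ ζ * ∑ i ∈ Finset.range n, r ^ (n - i) := by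
          rw [Finset.mul_sum]
      _ ≤ L₁ * ρ ^ ζ * (1 / (1 - r)) := by
          apply mul_le_mul_of_nonneg_left _ (by positivity)
          have hre : ∀ i ∈ Finset.range n, r ^ (n - i) = r ^ (n - 1 - i + 1) := by
            intro i hi
            rw [Finset.mem_range] at hi
            congr 1
            omega
          calc ∑ i ∈ Finset.range n, r ^ (n - i)
              = ∑ k ∈ Finset.range n, r ^ (n - 1 - k + 1) := Finset.sum_congr rfl hre
            _ = ∑ k ∈ Finset.range n, r ^ (k + 1) :=
                Finset.sum_range_reflect (fun k => r ^ (k + 1)) n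
            _ ≤ ∑ k ∈ Finset.range n, r ^ k := by
                apply Finset.sum_le_sum
                intro k hk
                rw [Finset.mem_range] at hk
                exact pow_le_pow_of_le_one hr0.le hr1.le (by omega)
            _ ≤ 1 / (1 - r) := by
                rw [geom_sum_eq (ne_of_lt hr1)]
                have heq : (r ^ n - 1) / (r - 1) = (1 - r ^ n) / (1 - r) := by
                  rw [div_eq_div_iff (by linarith) (by linarith)]
                  ring
                rw [heq]
                gcongr
                nlinarith [pow_nonneg hr0.le n]
      _ ≤ 2 * L₁ * ρ ^ ζ / (1 - r) := by
          rw [mul_one_div]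
          gcongr
          linarith
  refine ⟨hsum, ?_, ?_⟩
  · rw [← Real.exp_sum, ← Real.exp_sum, ← Real.exp_sub, ← Finset.sum_sub_distrib,
      ← Real.exp_neg, Real.exp_le_exp]
    linarith [(abs_le.mp hsum).1]
  · rw [← Real.exp_sum, ← Real.exp_sum, ← Real.exp_sub, ← Finset.sum_sub_distrib,
      Real.exp_le_exp]
    exact (abs_le.mp hsum).2
end

section
/- Let f be a measurable map preserving an ergodic probability measure μ, and let P^T be a subadditive cocycle of invertible linear maps over the flow φ, i.e. the functions x ↦ log‖(P^{T}|N_x)^{-1}‖ are integrable and subadditive: log‖(P^{s+t}|N_x)^{-1}‖ ≤ log‖(P^{t}|N_{φ_s x})^{-1}‖ + log‖(P^{s}|N_x)^{-1}‖. If for μ-a.e. x, lim_{t→∞} (1/t)log‖(P^t|N_x)^{-1}‖ ≤ −c₀ < 0, then there exists T > 0 with ∫ (1/T)·log‖(P^T|N_x)^{-1}‖ dμ ≤ −c₀/2, and for μ-a.e. x the Birkhoff averages (1/n)∑_{i=0}^{n−1}(1/T)log‖(P^T|N_{φ_{iT}x})^{-1}‖ converge to a value ≤ −c₀/2. -/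
open MeasureTheory Filter Topology

private lemma limsup_le_aux {u w : ℕ → ℝ}
    (h : ∀ b M : ℝ, b < M → (∀ᶠ n in atTop, u n < b) → (∀ᶠ n in atTop, w n < M)) :
    limsup (fun n => (w n : EReal)) atTop ≤ limsup (fun n => (u n : EReal)) atTop := by
  set L := limsup (fun n => (u n : EReal)) atTop with hL
  by_contra hc
  push_neg at hc
  obtain ⟨m, hm1, hm2⟩ := EReal.lt_iff_exists_real_btwn.1 hc
  obtain ⟨b, hb1, hb2⟩ := EReal.lt_iff_exists_real_btwn.1 hm1
  have hev : ∀ᶠ n in atTop, (u n : EReal) < (b : EReal) := eventually_lt_of_limsup_lt hb1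
  have hev' : ∀ᶠ n in atTop, u n < b := hev.mono fun n hn => EReal.coe_lt_coe_iff.1 hn
  have h2 := h b m (EReal.coe_lt_coe_iff.1 hb2) hev'
  have h3 : limsup (fun n => (w n : EReal)) atTop ≤ (m : EReal) :=
    limsup_le_of_le (by isBoundedDefault)
      (h2.mono fun n hn => le_of_lt (EReal.coe_lt_coe_iff.2 hn))
  exact absurd (lt_of_le_of_lt h3 hm2) (lt_irrefl _)

private lemma tendsto_aux1 (c b : ℝ) :
    Tendsto (fun n : ℕ => (c + (n : ℝ) * b) / ((n : ℝ) + 1)) atTop (𝓝 b) := by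
  have key : Tendsto (fun n : ℕ => (c - b) / ((n : ℝ) + 1)) atTop (𝓝 0) :=
    Tendsto.div_atTop tendsto_const_nhds
      (tendsto_atTop_add_const_right _ 1 tendsto_natCast_atTop_atTop)
  have heq : (fun n : ℕ => (c + (n : ℝ) * b) / ((n : ℝ) + 1))
      = fun n : ℕ => b + (c - b) / ((n : ℝ) + 1) := by
    funext n
    have hn : ((n : ℝ) + 1) ≠ 0 := by positivity
    field_simp
    ring
  rw [heq]
  simpa using tendsto_const_nhds.add key

private lemma tendsto_aux2 (c b : ℝ) :
    Tendsto (fun n : ℕ => (((n : ℝ) + 1) * b - c) / (n : ℝ)) atTop (𝓝 b) := by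
  have key : Tendsto (fun n : ℕ => (b - c) / (n : ℝ)) atTop (𝓝 0) :=
    Tendsto.div_atTop tendsto_const_nhds tendsto_natCast_atTop_atTop
  have heq : ∀ᶠ n : ℕ in atTop, b + (b - c) / (n : ℝ)
      = (((n : ℝ) + 1) * b - c) / (n : ℝ) := by
    filter_upwards [eventually_ge_atTop 1] with n hn
    have hn' : (n : ℝ) ≠ 0 := by positivity
    field_simp
    ring
  exact Tendsto.congr' heq (by simpa using tendsto_const_nhds.add key)

/-- limsup invariance under the affine cocycle relation. -/
private lemma limsup_shift_eq {v u : ℕ → ℝ} {c : ℝ}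
    (h : ∀ n : ℕ, v (n + 1) = (c + (n : ℝ) * u n) / ((n : ℝ) + 1)) :
    limsup (fun n => (v n : EReal)) atTop = limsup (fun n => (u n : EReal)) atTop := by
  have hshift : limsup (fun n => (v n : EReal)) atTop
      = limsup (fun n => (v (n + 1) : EReal)) atTop :=
    (Filter.limsup_nat_add (fun n => (v n : EReal)) 1).symm
  rw [hshift]
  apply le_antisymm
  · apply limsup_le_aux
    intro b m hbm hev
    have h1 : ∀ᶠ n : ℕ in atTop, (c + (n : ℝ) * b) / ((n : ℝ) + 1) < m :=
      (tendsto_aux1 c b).eventually_lt_const hbm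
    filter_upwards [hev, h1] with n hn hn1
    rw [h n]
    refine lt_of_le_of_lt ?_ hn1
    apply div_le_div_of_nonneg_right ?_ ?_ |>.trans_eq rfl
    · exact add_le_add_right (mul_le_mul_of_nonneg_left hn.le (Nat.cast_nonneg n)) c
    · positivity
  · apply limsup_le_aux
    intro b m hbm hev
    have h1 : ∀ᶠ n : ℕ in atTop, (((n : ℝ) + 1) * b - c) / (n : ℝ) < m :=
      (tendsto_aux2 c b).eventually_lt_const hbm
    filter_upwards [hev, h1, eventually_ge_atTop 1] with n hn hn1 hn2
    have hnpos : (0 : ℝ) < (n : ℝ) := by exact_mod_cast hn2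
    have hrel : (n : ℝ) * u n = ((n : ℝ) + 1) * v (n + 1) - c := by
      rw [h n]
      field_simp
      ring
    have : (n : ℝ) * u n < ((n : ℝ) + 1) * b - c := by
      rw [hrel]
      have : ((n : ℝ) + 1) * v (n + 1) < ((n : ℝ) + 1) * b :=
        mul_lt_mul_of_pos_left hn (by positivity)
      linarith
    calc u n = ((n : ℝ) * u n) / (n : ℝ) := by field_simp
      _ < (((n : ℝ) + 1) * b - c) / (n : ℝ) := by gcongr
      _ < m := hn1

private def maxSum {M : Type*} (f : M → M) (g : M → ℝ) : ℕ → M → ℝ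
  | 0 => g
  | n + 1 => fun x => g x + max 0 (maxSum f g n (f x))

private lemma maxSum_mono {M : Type*} (f : M → M) (g : M → ℝ) :
    ∀ n x, maxSum f g n x ≤ maxSum f g (n + 1) x := by
  intro n
  induction n with
  | zero => intro x; exact le_add_of_nonneg_right (le_max_left _ _)
  | succ n ih =>
    intro x
    exact add_le_add_right (max_le_max le_rfl (ih (f x))) _

private lemma maxSum_key {M : Type*} (f : M → M) (g : M → ℝ) (n : ℕ) (x : M) :
    maxSum f g n x ≤ g x + max 0 (maxSum f g n (f x)) := by
  cases n with
  | zero => exact le_add_of_nonneg_right (le_max_left _ _)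
  | succ n =>
    calc maxSum f g (n + 1) x = g x + max 0 (maxSum f g n (f x)) := rfl
      _ ≤ g x + max 0 (maxSum f g (n + 1) (f x)) :=
          add_le_add_right (max_le_max le_rfl (maxSum_mono f g n (f x))) _

private lemma birkhoffSum_le_maxSum {M : Type*} (f : M → M) (g : M → ℝ) :
    ∀ (n : ℕ) (x : M), birkhoffSum f g (n + 1) x ≤ maxSum f g n x := by
  intro n
  induction n with
  | zero => intro x; simp [birkhoffSum_one, maxSum]
  | succ n ih =>
    intro x
    rw [birkhoffSum_succ']
    calc g x + birkhoffSum f g (n + 1) (f x) ≤ g x + maxSum f g n (f x) :=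
          add_le_add_right (ih (f x)) _
      _ ≤ g x + max 0 (maxSum f g n (f x)) := add_le_add_right (le_max_right _ _) _
      _ = maxSum f g (n + 1) x := rfl

private lemma maxSum_measurable {M : Type*} [MeasurableSpace M] {f : M → M} {g : M → ℝ}
    (hf : Measurable f) (hg : Measurable g) (n : ℕ) : Measurable (maxSum f g n) := by
  induction n with
  | zero => exact hg
  | succ n ih => exact hg.add (measurable_const.max (ih.comp hf))

private lemma maxSum_integrable {M : Type*} [MeasurableSpace M] {f : M → M} {μ : Measure M}
    (hf : MeasurePreserving f μ μ) {g : M → ℝ} (hgm : Measurable g) (hgi : Integrable g μ)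
    (n : ℕ) : Integrable (maxSum f g n) μ := by
  induction n with
  | zero => exact hgi
  | succ n ih =>
    refine hgi.add ?_
    have h1 : Integrable (maxSum f g n ∘ f) μ :=
      (hf.integrable_comp (maxSum_measurable hf.measurable hgm n).aestronglyMeasurable).2 ih
    have h2 : Integrable (fun x => max (maxSum f g n (f x)) 0) μ := h1.pos_part
    exact h2.congr (ae_of_all _ fun x => max_comm _ _)

/-- Garsia's maximal ergodic theorem, specialized: if a.e. point has some positive
Birkhoff sum, then the integral of `g` is nonnegative. -/
private lemma maximal_ergodic {M : Type*} [MeasurableSpace M] {f : M → M} {μ : Measure M}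
    [IsProbabilityMeasure μ] (hf : MeasurePreserving f μ μ) {g : M → ℝ}
    (hgm : Measurable g) (hgi : Integrable g μ)
    (hE : ∀ᵐ x ∂μ, ∃ n : ℕ, 0 < birkhoffSum f g (n + 1) x) :
    0 ≤ ∫ x, g x ∂μ := by
  set Φ := maxSum f g with hΦ
  have hΦm : ∀ n, Measurable (Φ n) := maxSum_measurable hf.measurable hgm
  have hΦi : ∀ n, Integrable (Φ n) μ := maxSum_integrable hf hgm hgi
  set E : ℕ → Set M := fun n => {x | 0 < Φ n x} with hEdef
  have hEm : ∀ n, MeasurableSet (E n) := fun n => measurableSet_lt measurable_const (hΦm n)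
  have hEmono : Monotone E := by
    intro a b hab x hx
    simp only [hEdef, Set.mem_setOf_eq] at hx ⊢
    calc (0:ℝ) < Φ a x := hx
      _ ≤ Φ b x := by
        clear hx
        induction hab with
        | refl => exact le_rfl
        | step h ih => exact le_trans ih (maxSum_mono f g _ x)
  -- integrability of composed positive parts
  have hposint : ∀ n, Integrable (fun x => max 0 (Φ n (f x))) μ := by
    intro n
    have h1 : Integrable (Φ n ∘ f) μ :=
      (hf.integrable_comp (hΦm n).aestronglyMeasurable).2 (hΦi n)
    exact h1.pos_part.congr (ae_of_all _ fun x => max_comm _ _)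
  -- step 1: for each n, 0 ≤ ∫ x in E n, g x
  have step1 : ∀ n, 0 ≤ ∫ x in E n, g x ∂μ := by
    intro n
    have key : ∀ x, Φ n x - max 0 (Φ n (f x)) ≤ g x := fun x => by
      have := maxSum_key f g n x; linarith
    have h1 : ∫ x in E n, (Φ n x - max 0 (Φ n (f x))) ∂μ ≤ ∫ x in E n, g x ∂μ :=
      setIntegral_mono ((hΦi n).sub (hposint n)).integrableOn hgi.integrableOn key
    have h2 : ∫ x in E n, (Φ n x - max 0 (Φ n (f x))) ∂μ
        = ∫ x in E n, Φ n x ∂μ - ∫ x in E n, max 0 (Φ n (f x)) ∂μ :=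
      integral_sub (hΦi n).integrableOn (hposint n).integrableOn
    -- ∫_{E n} Φ n = ∫ max 0 (Φ n)
    have h3 : ∫ x in E n, Φ n x ∂μ = ∫ x, max 0 (Φ n x) ∂μ := by
      have hposΦ : Integrable (fun x => max 0 (Φ n x)) μ :=
        (hΦi n).pos_part.congr (ae_of_all _ fun x => max_comm _ _)
      rw [← integral_add_compl (hEm n) hposΦ]
      have e1 : ∫ x in E n, Φ n x ∂μ = ∫ x in E n, max 0 (Φ n x) ∂μ := by
        refine setIntegral_congr_fun (hEm n) fun x hx => ?_
        have : 0 < Φ n x := hx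
        rw [max_eq_right this.le]
      have e2 : ∫ x in (E n)ᶜ, max 0 (Φ n x) ∂μ = 0 := by
        rw [setIntegral_congr_fun (hEm n).compl (g := fun _ => (0:ℝ)) fun x hx => ?_]
        · simp
        · have : ¬ (0 < Φ n x) := hx
          rw [max_eq_left (not_lt.1 this)]
      rw [e1, e2, add_zero]
    -- ∫_{E n} (Φ n ∘ f)⁺ ≤ ∫ (Φ n ∘ f)⁺ = ∫ (Φ n)⁺
    have h4 : ∫ x in E n, max 0 (Φ n (f x)) ∂μ ≤ ∫ x, max 0 (Φ n (f x)) ∂μ :=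
      setIntegral_le_integral (hposint n) (ae_of_all _ fun x => le_max_left _ _)
    have h5 : ∫ x, max 0 (Φ n (f x)) ∂μ = ∫ x, max 0 (Φ n x) ∂μ := by
      have hmap : Measure.map f μ = μ := hf.map_eq
      calc ∫ x, max 0 (Φ n (f x)) ∂μ
          = ∫ y, max 0 (Φ n y) ∂(Measure.map f μ) := by
            rw [integral_map hf.measurable.aemeasurable]
            rw [hmap]
            exact (measurable_const.max (hΦm n)).aestronglyMeasurable
        _ = ∫ x, max 0 (Φ n x) ∂μ := by rw [hmap]
    linarith
  -- step 2: pass to the union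
  have hunion : Tendsto (fun n => ∫ x in E n, g x ∂μ) atTop (𝓝 (∫ x in ⋃ n, E n, g x ∂μ)) :=
    tendsto_setIntegral_of_monotone hEm hEmono hgi.integrableOn
  have step2 : 0 ≤ ∫ x in ⋃ n, E n, g x ∂μ := ge_of_tendsto' hunion step1
  -- step 3: the union has full measure
  have hfull : μ (⋃ n, E n)ᶜ = 0 := by
    have hmem : ∀ᵐ x ∂μ, x ∈ ⋃ n, E n := by
      filter_upwards [hE] with x hx
      obtain ⟨n, hn⟩ := hx
      exact Set.mem_iUnion.2 ⟨n, lt_of_lt_of_le hn (birkhoffSum_le_maxSum f g n x)⟩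
    have h0 := ae_iff.1 hmem
    have : (⋃ n, E n)ᶜ = {a | ¬ a ∈ ⋃ n, E n} := rfl
    rw [this]
    exact h0
  rw [← integral_add_compl (MeasurableSet.iUnion hEm) hgi]
  have : ∫ x in (⋃ n, E n)ᶜ, g x ∂μ = 0 := by
    have hz : μ.restrict (⋃ n, E n)ᶜ = 0 := Measure.restrict_eq_zero.mpr hfull
    rw [show (∫ x in (⋃ n, E n)ᶜ, g x ∂μ) = ∫ x, g x ∂(μ.restrict (⋃ n, E n)ᶜ) from rfl,
      hz, integral_zero_measure]
  linarith

private lemma birkhoffSum_measurable {M : Type*} [MeasurableSpace M] {f : M → M} {g : M → ℝ}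
    (hf : Measurable f) (hg : Measurable g) (n : ℕ) :
    Measurable (fun x => birkhoffSum f g n x) := by
  unfold birkhoffSum
  exact Finset.measurable_sum _ fun k _ => hg.comp (hf.iterate k)

private lemma birkhoff_limsup_le {M : Type*} [MeasurableSpace M] {f : M → M} {μ : Measure M}
    [IsProbabilityMeasure μ] (hf : Ergodic f μ) {g : M → ℝ}
    (hgm : Measurable g) (hgi : Integrable g μ) :
    ∀ᵐ x ∂μ, limsup (fun n => ((birkhoffSum f g n x / n : ℝ) : EReal)) atTop
      ≤ ((∫ x, g x ∂μ : ℝ) : EReal) := by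
  have hfm : Measurable f := hf.measurable
  set F : M → EReal := fun x => limsup (fun n => ((birkhoffSum f g n x / n : ℝ) : EReal)) atTop
    with hFdef
  have hFm : Measurable F := by
    apply Measurable.limsup
    intro n
    exact (measurable_coe_real_ereal).comp ((birkhoffSum_measurable hfm hgm n).div_const _)
  have hFinv : F ∘ f = F := by
    funext x
    show limsup (fun n => ((birkhoffSum f g n (f x) / n : ℝ) : EReal)) atTop
      = limsup (fun n => ((birkhoffSum f g n x / n : ℝ) : EReal)) atTop
    refine (limsup_shift_eq (c := g x) fun n => ?_).symm
    have h1 : (n : ℝ) * (birkhoffSum f g n (f x) / n) = birkhoffSum f g n (f x) := by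
      rcases Nat.eq_zero_or_pos n with h | h
      · simp [h, birkhoffSum_zero]
      · field_simp
    rw [h1, birkhoffSum_succ' f g n x]
    push_cast
    ring
  obtain ⟨C, hC⟩ := hf.toPreErgodic.ae_eq_const_of_ae_eq_comp hFm hFinv
  have hCle : C ≤ ((∫ x, g x ∂μ : ℝ) : EReal) := by
    by_contra hc
    push_neg at hc
    obtain ⟨a, ha1, ha2⟩ := EReal.lt_iff_exists_real_btwn.1 hc
    have haI : (∫ x, g x ∂μ) < a := EReal.coe_lt_coe_iff.1 ha1
    -- a.e. x there is n with birkhoffSum f (g - a) (n+1) x > 0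
    have hEfull : ∀ᵐ x ∂μ, ∃ n : ℕ, 0 < birkhoffSum f (fun y => g y - a) (n + 1) x := by
      filter_upwards [hC] with x hx
      have hlt : (a : EReal) < F x := by rw [hx]; exact ha2
      have hfreq : ∃ᶠ n in atTop, (a : EReal) < ((birkhoffSum f g n x / n : ℝ) : EReal) :=
        frequently_lt_of_lt_limsup (by isBoundedDefault) hlt
      obtain ⟨n, hn1, hn2⟩ := (hfreq.and_eventually (eventually_ge_atTop 1)).exists
      have hn1' : a < birkhoffSum f g n x / n := EReal.coe_lt_coe_iff.1 hn1
      obtain ⟨m, rfl⟩ := Nat.exists_eq_add_of_le hn2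
      refine ⟨m, ?_⟩
      have hpos : (0:ℝ) < ((1 + m : ℕ) : ℝ) := by positivity
      have hsum : birkhoffSum f (fun y => g y - a) (1 + m) x
          = birkhoffSum f g (1 + m) x - (1 + m : ℕ) * a := by
        unfold birkhoffSum
        rw [Finset.sum_sub_distrib, Finset.sum_const, Finset.card_range]
        simp [nsmul_eq_mul]
      have hlt2 : a * ((1 + m : ℕ) : ℝ) < birkhoffSum f g (1 + m) x :=
        (lt_div_iff₀ hpos).1 hn1'
      rw [show m + 1 = 1 + m from Nat.add_comm m 1, hsum]
      nlinarith [hlt2]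
    have h0 := maximal_ergodic hf.toMeasurePreserving (hgm.sub measurable_const)
      (hgi.sub (integrable_const a)) hEfull
    simp only [Pi.sub_apply] at h0
    rw [integral_sub hgi (integrable_const a), integral_const] at h0
    simp at h0
    linarith
  filter_upwards [hC] with x hx
  exact le_of_eq_of_le hx hCle

private lemma birkhoff_meas {M : Type*} [MeasurableSpace M] {f : M → M} {μ : Measure M}
    [IsProbabilityMeasure μ] (hf : Ergodic f μ) {g : M → ℝ}
    (hgm : Measurable g) (hgi : Integrable g μ) :
    ∀ᵐ x ∂μ, Tendsto (fun n : ℕ => birkhoffSum f g n x / n) atTop (𝓝 (∫ x, g x ∂μ)) := by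
  have h1 := birkhoff_limsup_le hf hgm hgi
  have h2 := birkhoff_limsup_le hf hgm.neg hgi.neg
  filter_upwards [h1, h2] with x hx1 hx2
  set I := ∫ x, g x ∂μ with hI
  have hIneg : ∫ x, -g x ∂μ = -I := by rw [integral_neg]
  simp only [Pi.neg_apply] at hx2
  rw [hIneg] at hx2
  have hneg : ∀ n : ℕ, birkhoffSum f (fun y => -g y) n x / n = -(birkhoffSum f g n x / n) := by
    intro n
    unfold birkhoffSum
    rw [← neg_div, ← Finset.sum_neg_distrib]
  rw [tendsto_order]
  constructor
  · intro a ha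
    have h : limsup (fun n => ((-(birkhoffSum f g n x / n) : ℝ) : EReal)) atTop
        ≤ ((-I : ℝ) : EReal) := by
      refine le_trans (le_of_eq ?_) hx2
      congr 1
      funext n
      exact congrArg _ (hneg n).symm
    have hlt : limsup (fun n => ((-(birkhoffSum f g n x / n) : ℝ) : EReal)) atTop
        < ((-a : ℝ) : EReal) :=
      lt_of_le_of_lt h (EReal.coe_lt_coe_iff.2 (by linarith))
    have := eventually_lt_of_limsup_lt hlt
    filter_upwards [this] with n hn
    have : -(birkhoffSum f g n x / n) < -a := EReal.coe_lt_coe_iff.1 hn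
    linarith
  · intro a ha
    have hlt : limsup (fun n => ((birkhoffSum f g n x / n : ℝ) : EReal)) atTop
        < ((a : ℝ) : EReal) := lt_of_le_of_lt hx1 (EReal.coe_lt_coe_iff.2 ha)
    have := eventually_lt_of_limsup_lt hlt
    filter_upwards [this] with n hn
    exact EReal.coe_lt_coe_iff.1 hn

/-- Pointwise Birkhoff ergodic theorem for an ergodic map on a probability space. -/
private lemma birkhoff_ae {M : Type*} [MeasurableSpace M] {f : M → M} {μ : Measure M}
    [IsProbabilityMeasure μ] (hf : Ergodic f μ) {g : M → ℝ} (hgi : Integrable g μ) :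
    ∀ᵐ x ∂μ, Tendsto (fun n : ℕ => birkhoffSum f g n x / n) atTop (𝓝 (∫ x, g x ∂μ)) := by
  set g' := hgi.1.mk g with hg'def
  have hg'm : Measurable (hgi.1.mk g) := hgi.1.measurable_mk
  have hgg' : g =ᵐ[μ] g' := hgi.1.ae_eq_mk
  have hg'i : Integrable g' μ := hgi.congr hgg'
  have hInt : ∫ x, g' x ∂μ = ∫ x, g x ∂μ := integral_congr_ae hgg'.symm
  have hmain := birkhoff_meas hf hg'm hg'i
  -- transfer along a.e. equality of all iterates
  have hiter : ∀ k : ℕ, (fun x => g (f^[k] x)) =ᵐ[μ] fun x => g' (f^[k] x) := by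
    intro k
    have hmp : MeasurePreserving f^[k] μ μ := hf.toMeasurePreserving.iterate k
    exact ae_eq_comp hmp.measurable.aemeasurable (hmp.map_eq.symm ▸ hgg')
  have hall : ∀ᵐ x ∂μ, ∀ k : ℕ, g (f^[k] x) = g' (f^[k] x) := ae_all_iff.2 hiter
  filter_upwards [hmain, hall] with x hx hkx
  rw [hInt] at hx
  refine hx.congr fun n => ?_
  congr 1
  unfold birkhoffSum
  exact (Finset.sum_congr rfl fun k _ => (hkx k).symm)


/-- Kingman step in Corollary D: if the subadditive cocycle
`u T x = log‖(P^T|N_x)⁻¹‖` has a.e. asymptotic rate `≤ -c₀ < 0`, then some finite time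
`T` achieves rate `≤ -c₀/2` on average, and the Birkhoff averages of the time-`T`
observable converge a.e. to a value `≤ -c₀/2`. -/
theorem subadditive_cocycle_finite_time_rate
    {M : Type*} [MeasurableSpace M]
    (φ : ℝ → M → M) (hφmeas : ∀ t, Measurable (φ t))
    (hφ0 : ∀ x, φ 0 x = x) (hflow : ∀ s t x, φ (s + t) x = φ t (φ s x))
    (μ : Measure M) [IsProbabilityMeasure μ]
    (hinv : ∀ t : ℝ, MeasurePreserving (φ t) μ μ)
    (herg : ∀ t : ℝ, t ≠ 0 → Ergodic (φ t) μ)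
    (u : ℝ → M → ℝ)
    (hint : ∀ T : ℝ, 0 < T → Integrable (u T) μ)
    (hsub : ∀ (s t : ℝ), 0 ≤ s → 0 ≤ t → ∀ x, u (s + t) x ≤ u t (φ s x) + u s x)
    (c₀ : ℝ) (hc₀ : 0 < c₀)
    (hlim : ∀ᵐ x ∂μ, ∃ ℓ : ℝ, ℓ ≤ -c₀ ∧
      Tendsto (fun t : ℝ => u t x / t) atTop (𝓝 ℓ)) :
    ∃ T : ℝ, 0 < T ∧ (∫ x, (1 / T) * u T x ∂μ) ≤ -c₀ / 2 ∧
      ∀ᵐ x ∂μ, ∃ ℓ : ℝ, ℓ ≤ -c₀ / 2 ∧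
        Tendsto (fun n : ℕ =>
            (1 / (n : ℝ)) * ∑ i ∈ Finset.range n, (1 / T) * u T (φ (i * T) x)) atTop
          (𝓝 ℓ) := by
  -- iterates of the time-T map
  have hiter : ∀ (T : ℝ) (k : ℕ) (x : M), (φ T)^[k] x = φ (k * T) x := by
    intro T k
    induction k with
    | zero => intro x; simpa using (hφ0 x).symm
    | succ k ih =>
      intro x
      rw [Function.iterate_succ_apply', ih]
      have hcast : ((k + 1 : ℕ) : ℝ) * T = (k : ℝ) * T + T := by push_cast; ring
      rw [hcast, hflow ((k : ℝ) * T) T x]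
  -- Step 1: find a good finite time T (a natural number)
  have key : ∃ T : ℝ, 0 < T ∧ (∫ x, u T x ∂μ) / T ≤ -c₀ / 2 := by
    have herg1 := herg 1 one_ne_zero
    have hint1 := hint 1 one_pos
    set a1 := ∫ x, u 1 x ∂μ with ha1
    by_cases hcase : a1 ≤ -c₀ / 2
    · exact ⟨1, one_pos, by simpa using hcase⟩
    push_neg at hcase
    -- integral of composition with the flow
    have hcompint : ∀ k : ℕ, Integrable (fun x => u 1 (φ (k : ℝ) x)) μ :=
      fun k => ((hinv (k : ℝ)).integrable_comp hint1.1).2 hint1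
    have hcompeq : ∀ k : ℕ, ∫ x, u 1 (φ (k : ℝ) x) ∂μ = a1 := by
      intro k
      have h1 : Measure.map (φ (k : ℝ)) μ = μ := (hinv _).map_eq
      calc ∫ x, u 1 (φ (k : ℝ) x) ∂μ
          = ∫ y, u 1 y ∂(Measure.map (φ (k : ℝ)) μ) :=
            (integral_map (hφmeas _).aemeasurable (by rw [h1]; exact hint1.1)).symm
        _ = a1 := by rw [h1]
    -- Birkhoff sums of u 1 along φ 1
    have hiter1 : ∀ (k : ℕ) (x : M), (φ 1)^[k] x = φ (k : ℝ) x := by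
      intro k x
      rw [hiter 1 k x, mul_one]
    have hSint : ∀ m : ℕ, Integrable (birkhoffSum (φ 1) (u 1) m) μ := by
      intro m
      unfold birkhoffSum
      apply integrable_finset_sum
      intro k _
      exact ((hcompint k).congr (ae_of_all _ fun x => by simp [hiter1]))
    have hSeq : ∀ m : ℕ, ∫ x, birkhoffSum (φ 1) (u 1) m x ∂μ = m * a1 := by
      intro m
      unfold birkhoffSum
      rw [integral_finset_sum _ (fun k _ =>
        ((hcompint k).congr (ae_of_all _ fun x => by simp [hiter1])))]
      have : ∀ k ∈ Finset.range m, (∫ x, u 1 ((φ 1)^[k] x) ∂μ) = a1 := by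
        intro k _
        rw [show (∫ x, u 1 ((φ 1)^[k] x) ∂μ) = ∫ x, u 1 (φ (k : ℝ) x) ∂μ from
          integral_congr_ae (ae_of_all _ fun x => by simp [hiter1]), hcompeq k]
      rw [Finset.sum_congr rfl this, Finset.sum_const, Finset.card_range, nsmul_eq_mul]
    -- subadditivity: u (n+1) ≤ S_{n+1}
    have hsubn : ∀ (n : ℕ) (x : M), u ((n : ℝ) + 1) x ≤ birkhoffSum (φ 1) (u 1) (n + 1) x := by
      intro n
      induction n with
      | zero => intro x; simp [birkhoffSum_one]
      | succ n ih =>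
        intro x
        have h := hsub ((n : ℝ) + 1) 1 (by positivity) one_pos.le x
        calc u ((↑(n + 1) : ℝ) + 1) x = u (((n : ℝ) + 1) + 1) x := by push_cast; ring_nf
          _ ≤ u 1 (φ ((n : ℝ) + 1) x) + u ((n : ℝ) + 1) x := h
          _ ≤ u 1 (φ ((n : ℝ) + 1) x) + birkhoffSum (φ 1) (u 1) (n + 1) x := by
              linarith [ih x]
          _ = birkhoffSum (φ 1) (u 1) (n + 1 + 1) x := by
              have hs := birkhoffSum_succ (φ 1) (u 1) (n + 1) x
              have hit : (φ 1)^[n + 1] x = φ ((n : ℝ) + 1) x := by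
                rw [hiter1 (n + 1) x]; push_cast; ring_nf
              rw [hs, hit]; ring
      -- the nonnegative defect
    set w : ℕ → M → ℝ := fun n x =>
      (birkhoffSum (φ 1) (u 1) (n + 1) x - u ((n : ℝ) + 1) x) / ((n : ℝ) + 1) with hwdef
    have hnint : ∀ n : ℕ, Integrable (fun x => u ((n : ℝ) + 1) x) μ :=
      fun n => hint _ (by positivity)
    have hwnonneg : ∀ n x, 0 ≤ w n x :=
      fun n x => div_nonneg (sub_nonneg.2 (hsubn n x)) (by positivity)
    have hwint : ∀ n, Integrable (w n) μ :=
      fun n => ((hSint (n + 1)).sub (hnint n)).div_const _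
    -- a.e. limit of w
    have hb1 := birkhoff_ae herg1 hint1
    have hae : ∀ᵐ x ∂μ, ∃ ℓ : ℝ, ℓ ≤ -c₀ ∧
        Tendsto (fun n : ℕ => w n x) atTop (𝓝 (a1 - ℓ)) := by
      filter_upwards [hb1, hlim] with x hx hℓ
      obtain ⟨ℓ, hℓ1, hℓ2⟩ := hℓ
      refine ⟨ℓ, hℓ1, ?_⟩
      have hu : Tendsto (fun n : ℕ => u ((n : ℝ) + 1) x / ((n : ℝ) + 1)) atTop (𝓝 ℓ) := by
        have h1 : Tendsto (fun n : ℕ => u ((n + 1 : ℕ) : ℝ) x / ((n + 1 : ℕ) : ℝ)) atTop (𝓝 ℓ) := by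
          have h2 : Tendsto (fun n : ℕ => u ((n : ℕ) : ℝ) x / ((n : ℕ) : ℝ)) atTop (𝓝 ℓ) :=
            hℓ2.comp tendsto_natCast_atTop_atTop
          exact h2.comp (tendsto_add_atTop_nat 1)
        refine h1.congr fun n => ?_
        push_cast
        ring_nf
      have hS : Tendsto (fun n : ℕ => birkhoffSum (φ 1) (u 1) (n + 1) x / ((n : ℝ) + 1)) atTop
          (𝓝 a1) := by
        have h2 := hx.comp (tendsto_add_atTop_nat 1)
        refine h2.congr fun n => ?_
        simp only [Function.comp_apply]
        push_cast
        ring_nf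
      have := hS.sub hu
      refine this.congr fun n => ?_
      rw [hwdef]
      simp only []
      rw [sub_div]
    -- Fatou argument
    set b := a1 + c₀ with hbdef
    have hbpos : 0 < b := by linarith
    have hG : ∀ n : ℕ, AEMeasurable (fun x => ENNReal.ofReal (w n x)) μ :=
      fun n => ENNReal.measurable_ofReal.comp_aemeasurable (hwint n).aemeasurable
    have fatou := lintegral_liminf_le' (u := atTop) hG
    have hlower : ENNReal.ofReal b ≤ ∫⁻ x, liminf (fun n => ENNReal.ofReal (w n x)) atTop ∂μ := by
      have hptwise : ∀ᵐ x ∂μ, ENNReal.ofReal b ≤ liminf (fun n => ENNReal.ofReal (w n x)) atTop := by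
        filter_upwards [hae] with x hx
        obtain ⟨ℓ, hℓ1, hw⟩ := hx
        have ht : Tendsto (fun n => ENNReal.ofReal (w n x)) atTop (𝓝 (ENNReal.ofReal (a1 - ℓ))) :=
          (ENNReal.continuous_ofReal.tendsto _).comp hw
        rw [ht.liminf_eq]
        exact ENNReal.ofReal_le_ofReal (by linarith)
      calc ENNReal.ofReal b = ∫⁻ _x, ENNReal.ofReal b ∂μ := by simp
        _ ≤ _ := lintegral_mono_ae hptwise
    have hlr : ∀ n, ∫⁻ x, ENNReal.ofReal (w n x) ∂μ = ENNReal.ofReal (∫ x, w n x ∂μ) :=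
      fun n => (ofReal_integral_eq_lintegral_ofReal (hwint n) (ae_of_all _ (hwnonneg n))).symm
    have hfin : ENNReal.ofReal b ≤ liminf (fun n => ENNReal.ofReal (∫ x, w n x ∂μ)) atTop := by
      refine le_trans (le_trans hlower fatou) (le_of_eq ?_)
      congr 1
      funext n
      exact hlr n
    have hexists : ∃ n : ℕ, a1 + c₀ / 2 ≤ ∫ x, w n x ∂μ := by
      by_contra hcon
      push_neg at hcon
      have hub : liminf (fun n => ENNReal.ofReal (∫ x, w n x ∂μ)) atTop
          ≤ ENNReal.ofReal (a1 + c₀ / 2) :=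
        liminf_le_of_frequently_le (Frequently.of_forall fun n =>
          ENNReal.ofReal_le_ofReal (hcon n).le)
      have : ENNReal.ofReal b ≤ ENNReal.ofReal (a1 + c₀ / 2) := le_trans hfin hub
      have hlt : ENNReal.ofReal (a1 + c₀ / 2) < ENNReal.ofReal b :=
        (ENNReal.ofReal_lt_ofReal_iff hbpos).2 (by rw [hbdef]; linarith)
      exact absurd (lt_of_le_of_lt this hlt) (lt_irrefl _)
    obtain ⟨n, hn⟩ := hexists
    -- compute ∫ w n
    have hwn : ∫ x, w n x ∂μ
        = (((n : ℝ) + 1) * a1 - ∫ x, u ((n : ℝ) + 1) x ∂μ) / ((n : ℝ) + 1) := by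
      rw [hwdef]
      simp only []
      rw [integral_div, integral_sub (hSint (n + 1)) (hnint n), hSeq (n + 1)]
      push_cast
      ring_nf
    refine ⟨(n : ℝ) + 1, by positivity, ?_⟩
    rw [hwn] at hn
    have hpos : (0 : ℝ) < (n : ℝ) + 1 := by positivity
    have h1 : (a1 + c₀ / 2) * ((n : ℝ) + 1)
        ≤ ((n : ℝ) + 1) * a1 - ∫ x, u ((n : ℝ) + 1) x ∂μ := (le_div_iff₀ hpos).1 hn
    rw [div_le_iff₀ hpos]
    nlinarith [h1]
  -- Step 2: assemble
  obtain ⟨T, hT, hTle⟩ := key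
  have hergT := herg T hT.ne'
  have hb := birkhoff_ae hergT (hint T hT)
  refine ⟨T, hT, ?_, ?_⟩
  · rw [integral_const_mul]
    rw [div_le_iff₀ hT] at hTle
    calc (1 / T) * ∫ x, u T x ∂μ = (∫ x, u T x ∂μ) / T := by ring
      _ ≤ -c₀ / 2 := by rw [div_le_iff₀ hT]; linarith [hTle]
  · filter_upwards [hb] with x hx
    refine ⟨(1 / T) * ∫ x, u T x ∂μ, ?_, ?_⟩
    · rw [div_le_iff₀ hT] at hTle
      calc (1 / T) * ∫ x, u T x ∂μ = (∫ x, u T x ∂μ) / T := by ring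
        _ ≤ -c₀ / 2 := by rw [div_le_iff₀ hT]; linarith [hTle]
    · have heq : (fun n : ℕ =>
          (1 / (n : ℝ)) * ∑ i ∈ Finset.range n, (1 / T) * u T (φ (i * T) x))
          = fun n : ℕ => (1 / T) * (birkhoffSum (φ T) (u T) n x / n) := by
        funext n
        unfold birkhoffSum
        rw [show (∑ i ∈ Finset.range n, (1 / T) * u T (φ (i * T) x))
            = (1 / T) * ∑ i ∈ Finset.range n, u T (φ ((i : ℝ) * T) x) from
          (Finset.mul_sum _ _ _).symm]
        rw [show (∑ k ∈ Finset.range n, u T ((φ T)^[k] x))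
            = ∑ k ∈ Finset.range n, u T (φ ((k : ℝ) * T) x) from
          Finset.sum_congr rfl fun k _ => by rw [hiter T k x]]
        ring
      rw [heq]
      exact hx.const_mul _
end
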